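/- In the even Clifford algebra C₀(V,q) of a ternary quadratic form q with coefficients λᵢ = q(eᵢ) and λᵢⱼ = b_q(eᵢ,eⱼ), the elements ε₁ = e₁e₂, ε₂ = e₂e₃, ε₃ = e₃e₁ satisfy ε₂·ε₁ = (−λ₁₂λ₂₃)·1 + λ₂₃·ε₁ + λ₁₂·ε₂ + λ₂·ε₃. -/

import Mathlib

noncomputable section

open CliffordAlgebra

lemma even_clifford_aux {R A : Type*} [CommRing R] [Ring A] [Algebra R A] (a b c : A)
    (μ₂ μ₁₂ μ₁₃ μ₂₃ : R)
    (hb : b * b = algebraMap R A μ₂)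
    (hab : b * a = algebraMap R A μ₁₂ - a * b)
    (hbc : c * b = algebraMap R A μ₂₃ - b * c)
    (hca : c * a = algebraMap R A μ₁₃ - a * c) :
    b * c * (a * b) = algebraMap R A (-(μ₁₂ * μ₂₃))
      + μ₂₃ • (a * b) + μ₁₂ • (b * c) + μ₂ • (c * a) := by
  have r1 : a * b * algebraMap R A μ₂₃ = algebraMap R A μ₂₃ * (a * b) :=
    (Algebra.commutes _ _).symm
  have r2 : a * b * (b * c) = algebraMap R A μ₂ * (a * c) := by
    rw [show a * b * (b * c) = a * (b * b) * c by noncomm_ring, hb,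
      show a * algebraMap R A μ₂ = algebraMap R A μ₂ * a from (Algebra.commutes _ _).symm,
      mul_assoc]
  have r4 : algebraMap R A μ₁₃ * algebraMap R A μ₂ = algebraMap R A μ₂ * algebraMap R A μ₁₃ := by
    rw [← map_mul, ← map_mul, mul_comm]
  rw [show b * c * (a * b) = b * (c * a) * b by noncomm_ring, hca, mul_sub, sub_mul,
    show b * algebraMap R A μ₁₃ = algebraMap R A μ₁₃ * b from (Algebra.commutes _ _).symm,
    mul_assoc, hb,
    show b * (a * c) * b = (b * a) * (c * b) by noncomm_ring, hab, hbc]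
  simp only [Algebra.smul_def, map_neg, map_mul, sub_mul, mul_sub, r1, r2, r4]
  noncomm_ring

/-- In the even Clifford algebra of the ternary form
`q(x) = Σλᵢxᵢ² + Σ_{i<j} λᵢⱼxᵢxⱼ`, with `ε₁ = e₁e₂`, `ε₂ = e₂e₃`, `ε₃ = e₃e₁`, one has
`ε₂·ε₁ = (−λ₁₂λ₂₃)·1 + λ₂₃·ε₁ + λ₁₂·ε₂ + λ₂·ε₃`. -/
theorem even_clifford_eps2_mul_eps1 {R : Type*} [CommRing R]
    (lam₁ lam₂ lam₃ lam₁₂ lam₁₃ lam₂₃ : R)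
    (Q : QuadraticForm R (Fin 3 → R))
    (hQ : Q = (!![lam₁, 0, lam₁₃; lam₁₂, lam₂, 0; 0, lam₂₃, lam₃]).toQuadraticMap') :
    (ι Q (Pi.single 1 1) * ι Q (Pi.single 2 1))
        * (ι Q (Pi.single 0 1) * ι Q (Pi.single 1 1))
      = algebraMap R (CliffordAlgebra Q) (-(lam₁₂ * lam₂₃))
        + lam₂₃ • (ι Q (Pi.single 0 1) * ι Q (Pi.single 1 1))
        + lam₁₂ • (ι Q (Pi.single 1 1) * ι Q (Pi.single 2 1))
        + lam₂ • (ι Q (Pi.single 2 1) * ι Q (Pi.single 0 1)) := by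
  have hQ1 : Q (Pi.single 1 1) = lam₂ := by
    subst hQ
    simp [Matrix.toQuadraticMap', Matrix.toQuadraticForm', Matrix.toLinearMap₂'_apply, Fin.sum_univ_three]
  have hp01 : QuadraticMap.polar Q (Pi.single 0 1) (Pi.single 1 1) = lam₁₂ := by
    subst hQ
    simp [QuadraticMap.polar, Matrix.toQuadraticMap', Matrix.toQuadraticForm', Matrix.toLinearMap₂'_apply,
      Fin.sum_univ_three]
  have hp12 : QuadraticMap.polar Q (Pi.single 1 1) (Pi.single 2 1) = lam₂₃ := by
    subst hQ
    simp [QuadraticMap.polar, Matrix.toQuadraticMap', Matrix.toQuadraticForm', Matrix.toLinearMap₂'_apply,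
      Fin.sum_univ_three]
  have hp02 : QuadraticMap.polar Q (Pi.single 0 1) (Pi.single 2 1) = lam₁₃ := by
    subst hQ
    simp [QuadraticMap.polar, Matrix.toQuadraticMap', Matrix.toQuadraticForm', Matrix.toLinearMap₂'_apply,
      Fin.sum_univ_three]
    ring
  have hb : ι Q (Pi.single 1 1) * ι Q (Pi.single 1 1)
      = algebraMap R (CliffordAlgebra Q) lam₂ := by
    rw [ι_sq_scalar, hQ1]
  have hab : ι Q (Pi.single 1 1) * ι Q (Pi.single 0 1)
      = algebraMap R (CliffordAlgebra Q) lam₁₂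
        - ι Q (Pi.single 0 1) * ι Q (Pi.single 1 1) := by
    have h := ι_mul_ι_add_swap (Q := Q) (Pi.single 0 1) (Pi.single 1 1)
    rw [hp01] at h
    exact eq_sub_of_add_eq' h
  have hbc : ι Q (Pi.single 2 1) * ι Q (Pi.single 1 1)
      = algebraMap R (CliffordAlgebra Q) lam₂₃
        - ι Q (Pi.single 1 1) * ι Q (Pi.single 2 1) := by
    have h := ι_mul_ι_add_swap (Q := Q) (Pi.single 1 1) (Pi.single 2 1)
    rw [hp12] at h
    exact eq_sub_of_add_eq' h
  have hca : ι Q (Pi.single 2 1) * ι Q (Pi.single 0 1)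
      = algebraMap R (CliffordAlgebra Q) lam₁₃
        - ι Q (Pi.single 0 1) * ι Q (Pi.single 2 1) := by
    have h := ι_mul_ι_add_swap (Q := Q) (Pi.single 0 1) (Pi.single 2 1)
    rw [hp02] at h
    exact eq_sub_of_add_eq' h
  exact even_clifford_aux (ι Q (Pi.single 0 1)) (ι Q (Pi.single 1 1)) (ι Q (Pi.single 2 1))
    lam₂ lam₁₂ lam₁₃ lam₂₃ hb hab hbc hca
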